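/- Backward execution over-approximates the correct preimage: for a trace in which backward execution copies the precondition value at upward-exposed assignments and splits over all values at non-upward-exposed assignments, the state sequence of the correct (ground-truth) execution is contained, at every position, in the set of states produced by backward execution from the correct postcondition. -/

import Mathlib

structure Stmt (V D : Type) where
  lhs : V
  rhs : (V → D) → D

def exec {V D : Type} [DecidableEq V] (s : Stmt V D) (σ : V → D) : V → D :=
  Function.update σ s.lhs (s.rhs σ)

/-- Forward execution of the (correct) trace from the precondition. -/
def run {V D : Type} [DecidableEq V] (σ : V → D) (t : List (Stmt V D)) : V → D :=
  t.foldl (fun σ s => exec s σ) σ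

/-- One backward step for statement `s`, with `pfx` the statements preceding
`s` in the whole trace: if `s` is upward exposed (no preceding statement
assigns its left-hand side), the variable is set to its precondition value;
otherwise the state splits over all possible values of the variable. -/
def backStep {V D : Type} [DecidableEq V] (pre : V → D) (pfx : List (Stmt V D))
    (s : Stmt V D) (τ : V → D) : Set (V → D) :=
  if ∀ u ∈ pfx, u.lhs ≠ s.lhs then
    {Function.update τ s.lhs (pre s.lhs)}
  else
    {σ | ∃ d : D, σ = Function.update τ s.lhs d}

/-- Backward execution ∇ of a suffix (second argument, in program order),
processing statements from the last one backwards; `pfx` is the prefix of the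
trace preceding the suffix (used to decide upward exposure wrt the whole
trace). -/
def backRun {V D : Type} [DecidableEq V] (pre : V → D) :
    List (Stmt V D) → List (Stmt V D) → (V → D) → Set (V → D)
  | _, [], σ => {σ}
  | pfx, s :: rest, σ =>
    ⋃ τ ∈ backRun pre (pfx ++ [s]) rest σ, backStep pre pfx s τ

lemma run_not_assigned {V D : Type} [DecidableEq V] (v : V) :
    ∀ (l : List (Stmt V D)) (σ : V → D), (∀ u ∈ l, u.lhs ≠ v) → run σ l v = σ v := by
  intro l
  induction l with
  | nil => intro σ h; rfl
  | cons a l ih =>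
    intro σ h
    have : run σ (a :: l) = run (exec a σ) l := rfl
    rw [this, ih _ (fun u hu => h u (List.mem_cons_of_mem _ hu))]
    exact Function.update_of_ne (Ne.symm (h a List.mem_cons_self)) _ _

/-- backward execution over-approximates the correct preimage:
for every position i, the state ω_i of the correct forward execution is among
the states produced by backward-executing the suffix s_{i+1},…,s_n from the
correct postcondition ω_post = ω_n. -/
theorem backward_overapproximates {V D : Type} [DecidableEq V]
    (t : List (Stmt V D)) (pre : V → D) :
    ∀ i ≤ t.length,
      run pre (t.take i) ∈ backRun pre (t.take i) (t.drop i) (run pre t) := by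
  suffices h : ∀ k i, i + k = t.length →
      run pre (t.take i) ∈ backRun pre (t.take i) (t.drop i) (run pre t) by
    intro i hi
    exact h (t.length - i) i (by omega)
  intro k
  induction k with
  | zero =>
    intro i hi
    rw [List.take_of_length_le (by omega), List.drop_of_length_le (by omega)]
    simp [backRun]
  | succ k ih =>
    intro i hi
    have hlt : i < t.length := by omega
    have hdrop : t.drop i = t[i] :: t.drop (i + 1) := List.drop_eq_getElem_cons hlt
    have htake : t.take (i + 1) = t.take i ++ [t[i]] := by
      rw [List.take_succ]
      simp [List.getElem?_eq_getElem hlt]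
    rw [hdrop]
    simp only [backRun, Set.mem_iUnion]
    refine ⟨run pre (t.take (i+1)), ?_, ?_⟩
    · rw [← htake]
      exact ih (i+1) (by omega)
    · have hrun : run pre (t.take (i+1)) = exec t[i] (run pre (t.take i)) := by
        rw [htake, run, List.foldl_append]; rfl
      rw [hrun]
      unfold backStep
      set σ := run pre (t.take i)
      set s := t[i]
      by_cases hue : ∀ u ∈ t.take i, u.lhs ≠ s.lhs
      · rw [if_pos hue]
        have h1 : σ s.lhs = pre s.lhs := run_not_assigned s.lhs (t.take i) pre hue
        simp only [Set.mem_singleton_iff, exec]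
        rw [Function.update_idem, ← h1, Function.update_eq_self]
      · rw [if_neg hue]
        exact ⟨σ s.lhs, by rw [exec, Function.update_idem, Function.update_eq_self]⟩
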